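/- Fix a prime p and ε > 0. If there exists a real x with liminf_{q→∞} q·|q|_p·‖qx‖ ≥ ε, then there exists a real y with inf_{q∈ℕ, q≥1} q·|q|_p·‖qy‖ ≥ ε. -/

import Mathlib

open Filter

noncomputable def padicAbs (p q : ℕ) : ℝ := (p : ℝ) ^ (-(padicValNat p q : ℤ))

noncomputable def distNearestInt (x : ℝ) : ℝ := |x - round x|

noncomputable def plcQty (p : ℕ) (x : ℝ) (q : ℕ) : ℝ :=
  (q : ℝ) * padicAbs p q * distNearestInt ((q : ℝ) * x)

lemma dni_add_int (x : ℝ) (m : ℤ) : distNearestInt (x + m) = distNearestInt x := by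
  simp [distNearestInt, round_add_intCast]

lemma dni_lipschitz (a b : ℝ) : distNearestInt a ≤ |a - b| + distNearestInt b := by
  calc distNearestInt a ≤ |a - round b| := round_le a (round b)
    _ ≤ |a - b| + |b - round b| := by
        have := abs_sub_abs_le_abs_sub (a - round b) (b - round b)
        have h2 : |(a - round b) - (b - round b)| = |a - b| := by ring_nf
        nlinarith [abs_sub (a - (round b:ℝ)) (b - (round b:ℝ)), abs_abs (a - b)]
    _ = |a - b| + distNearestInt b := rfl

lemma dni_continuous : Continuous distNearestInt := by
  have : LipschitzWith 1 distNearestInt := by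
    apply LipschitzWith.of_dist_le_mul
    intro a b
    simp only [Real.dist_eq, NNReal.coe_one, one_mul]
    have h1 := dni_lipschitz a b
    have h2 := dni_lipschitz b a
    rw [abs_sub_comm b a] at h2
    rw [abs_sub_le_iff]
    constructor <;> linarith
  exact this.continuous

theorem stmt_3 (p : ℕ) (hp : p.Prime) (ε : ℝ) (hε : 0 < ε)
    (h : ∃ x : ℝ, ε ≤ liminf (plcQty p x) atTop) :
    ∃ y : ℝ, ∀ q : ℕ, 1 ≤ q → ε ≤ plcQty p y q := by
  obtain ⟨x, hx⟩ := h
  -- sequence of fractional parts of p^n x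
  set u : ℕ → ℝ := fun n => Int.fract ((p : ℝ) ^ n * x) with hu
  have hmem : ∀ n, u n ∈ Set.Icc (0:ℝ) 1 := fun n =>
    ⟨Int.fract_nonneg _, le_of_lt (Int.fract_lt_one _)⟩
  obtain ⟨y, -, φ, hφ, hty⟩ := (isCompact_Icc (a := (0:ℝ)) (b := 1)).tendsto_subseq hmem
  refine ⟨y, fun q hq => ?_⟩
  have hp1 : (1:ℝ) < (p:ℝ) := by exact_mod_cast hp.one_lt
  have hp0 : (0:ℝ) < (p:ℝ) := by linarith
  have hq0 : q ≠ 0 := by omega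
  haveI : Fact p.Prime := ⟨hp⟩
  -- key identity: plcQty p x (q * p^(φ k)) = q * padicAbs p q * distNearestInt (q * u (φ k))
  have key : ∀ n : ℕ, plcQty p x (q * p ^ n)
      = (q : ℝ) * padicAbs p q * distNearestInt ((q : ℝ) * u n) := by
    intro n
    have hval : padicValNat p (q * p ^ n) = padicValNat p q + n := by
      rw [padicValNat.mul hq0 (pow_ne_zero n hp.ne_zero), padicValNat.prime_pow]
    have hdni : distNearestInt ((↑(q * p ^ n) : ℝ) * x)
        = distNearestInt ((q : ℝ) * u n) := by
      have : (↑(q * p ^ n) : ℝ) * x = (q:ℝ) * u n + ((q : ℤ) * ⌊(p:ℝ)^n * x⌋ : ℤ) := by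
        push_cast [hu, Int.fract]
        ring
      rw [this, dni_add_int]
    rw [plcQty, padicAbs, hval, hdni, padicAbs]
    have hcast : (-(↑(padicValNat p q + n) : ℤ)) = -(padicValNat p q : ℤ) + (-(n:ℤ)) := by
      push_cast; ring
    rw [hcast, zpow_add₀ (ne_of_gt hp0), Nat.cast_mul, Nat.cast_pow]
    have hpn : ((p:ℝ)^n) * (p:ℝ) ^ (-(n:ℤ)) = 1 := by
      rw [← zpow_natCast (p:ℝ) n, ← zpow_add₀ (ne_of_gt hp0)]
      simp
    calc ((q:ℝ) * (p:ℝ)^n) * ((p:ℝ) ^ (-(padicValNat p q : ℤ)) * (p:ℝ) ^ (-(n:ℤ)))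
          * distNearestInt ((q:ℝ) * u n)
        = (q:ℝ) * (p:ℝ) ^ (-(padicValNat p q : ℤ)) * distNearestInt ((q:ℝ) * u n)
          * (((p:ℝ)^n) * (p:ℝ) ^ (-(n:ℤ))) := by ring
      _ = (q:ℝ) * (p:ℝ) ^ (-(padicValNat p q : ℤ)) * distNearestInt ((q:ℝ) * u n) := by
          rw [hpn]; ring
  -- the subsequence values converge to plcQty p y q
  have hconv : Tendsto (fun k => plcQty p x (q * p ^ φ k)) atTop (nhds (plcQty p y q)) := by
    have h1 : Tendsto (fun k => (q:ℝ) * u (φ k)) atTop (nhds ((q:ℝ) * y)) :=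
      (hty.const_mul _)
    have h2 : Tendsto (fun k => (q : ℝ) * padicAbs p q * distNearestInt ((q:ℝ) * u (φ k)))
        atTop (nhds ((q : ℝ) * padicAbs p q * distNearestInt ((q:ℝ) * y))) := by
      exact Tendsto.const_mul _ ((dni_continuous.tendsto _).comp h1)
    simpa [plcQty] using h2.congr (fun k => (key (φ k)).symm)
  -- the subsequence indices tend to atTop
  have hidx : Tendsto (fun k => q * p ^ φ k) atTop atTop := by
    apply tendsto_atTop_mono (f := fun k => φ k)
    · intro k
      calc φ k ≤ p ^ φ k := (Nat.lt_pow_self (n := φ k) hp.one_lt).le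
        _ ≤ q * p ^ φ k := Nat.le_mul_of_pos_left _ (by omega)
    · exact hφ.tendsto_atTop
  -- lower bound for the limit
  by_contra hcon
  push_neg at hcon
  set c := (plcQty p y q + ε) / 2 with hc
  have hcε : c < ε := by rw [hc]; linarith
  have hLc : plcQty p y q < c := by rw [hc]; linarith
  have hbdd : IsBoundedUnder (· ≥ ·) atTop (plcQty p x) := by
    refine isBoundedUnder_of ⟨0, fun n => ?_⟩
    unfold plcQty padicAbs distNearestInt
    positivity
  have hev : ∀ᶠ m in atTop, c < plcQty p x m :=
    eventually_lt_of_lt_liminf (lt_of_lt_of_le hcε hx) hbdd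
  have hev2 : ∀ᶠ k in atTop, c < plcQty p x (q * p ^ φ k) := hidx.eventually hev
  have : c ≤ plcQty p y q := ge_of_tendsto hconv (hev2.mono fun k hk => hk.le)
  linarith
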